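/- Let X be a compact Hausdorff space and let A and B be unital C(X)-algebras with structure maps Φ_A, Φ_B and fibre ideals I_x^A ⊆ A, I_x^B ⊆ B. Let π : A → B be a *-homomorphism that is C(X)-linear, i.e. π(Φ_A(f)a) = Φ_B(f)π(a) for all f ∈ C(X) and a ∈ A, and suppose that for every x ∈ X and every a ∈ A one has a ∈ I_x^A if and only if π(a) ∈ I_x^B (so the induced representation of each fibre A_x on B_x is well defined and faithful). If B is a continuous C(X)-algebra, i.e. the function x ↦ dist(b, I_x^B) is continuous for every b ∈ B, then A is a continuous C(X)-algebra: the function x ↦ dist(a, I_x^A) is continuous for every a ∈ A. -/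

import Mathlib

/-- The fibre ideal `I_x` of a `C(X)`-algebra `A` with structure map `Φ : C(X) → A` at a
point `x ∈ X`: the closure of the set of finite sums of elements `Φ(f) * a` with
`f x = 0` and `a ∈ A`. -/
def fiberIdeal {X : Type*} [TopologicalSpace X] {A : Type*} [CStarAlgebra A]
    (Φ : C(X, ℂ) →⋆ₐ[ℂ] A) (x : X) : Set A :=
  closure (AddSubmonoid.closure
    {c : A | ∃ (f : C(X, ℂ)) (a : A), f x = 0 ∧ c = Φ f * a} : Set A)



section FiberSub

variable {X : Type*} [TopologicalSpace X] {A : Type*} [CStarAlgebra A]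
  (Φ : C(X, ℂ) →⋆ₐ[ℂ] A) (x : X)

/-- The generators of the fibre ideal. -/
def fiberGen : Set A := {c : A | ∃ (f : C(X, ℂ)) (a : A), f x = 0 ∧ c = Φ f * a}

/-- The pre-submodule (finite sums of generators). -/
def fiberPre : Submodule ℂ A where
  carrier := (AddSubmonoid.closure (fiberGen Φ x) : Set A)
  add_mem' := fun ha hb => AddSubmonoid.add_mem _ ha hb
  zero_mem' := AddSubmonoid.zero_mem _
  smul_mem' := by
    intro c a ha
    induction ha using AddSubmonoid.closure_induction with
    | mem y hy =>
      obtain ⟨f, b, hf, rfl⟩ := hy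
      exact AddSubmonoid.subset_closure ⟨f, c • b, hf, (mul_smul_comm c (Φ f) b).symm⟩
    | zero => simpa using AddSubmonoid.zero_mem _
    | add y z _ _ hy hz => simpa [smul_add] using AddSubmonoid.add_mem _ hy hz

/-- The fibre ideal as a closed submodule. -/
noncomputable def fiberSub : Submodule ℂ A := (fiberPre Φ x).topologicalClosure

lemma fiberSub_coe : (fiberSub Φ x : Set A) = fiberIdeal Φ x := rfl

lemma fiberSub_isClosed : IsClosed ((fiberSub Φ x : Set A)) :=
  (fiberPre Φ x).isClosed_topologicalClosure

lemma fiberPre_mul_right (a : A) {s : A} (hs : s ∈ fiberPre Φ x) : s * a ∈ fiberPre Φ x := by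
  induction hs using AddSubmonoid.closure_induction with
  | mem y hy =>
    obtain ⟨f, b, hf, rfl⟩ := hy
    exact AddSubmonoid.subset_closure ⟨f, b * a, hf, (mul_assoc _ _ _)⟩
  | zero => simpa using AddSubmonoid.zero_mem _
  | add y z _ _ hy hz => simpa [add_mul] using AddSubmonoid.add_mem _ hy hz

lemma fiberSub_mul_right (a : A) {s : A} (hs : s ∈ fiberSub Φ x) : s * a ∈ fiberSub Φ x := by
  have hc : Continuous (fun y : A => y * a) := continuous_mul_right a
  have : s ∈ closure ((fiberPre Φ x) : Set A) := hs
  have h2 := (image_closure_subset_closure_image hc) (Set.mem_image_of_mem _ this)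
  refine closure_mono ?_ h2
  rintro - ⟨y, hy, rfl⟩
  exact fiberPre_mul_right Φ x a hy

variable (hΦ : ∀ f : C(X, ℂ), ∀ a : A, Φ f * a = a * Φ f)
include hΦ

lemma fiberPre_mul_left (a : A) {s : A} (hs : s ∈ fiberPre Φ x) : a * s ∈ fiberPre Φ x := by
  induction hs using AddSubmonoid.closure_induction with
  | mem y hy =>
    obtain ⟨f, b, hf, rfl⟩ := hy
    refine AddSubmonoid.subset_closure ⟨f, a * b, hf, ?_⟩
    rw [← mul_assoc, ← hΦ f a, mul_assoc]
  | zero => simpa using AddSubmonoid.zero_mem _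
  | add y z _ _ hy hz => simpa [mul_add] using AddSubmonoid.add_mem _ hy hz

lemma fiberSub_mul_left (a : A) {s : A} (hs : s ∈ fiberSub Φ x) : a * s ∈ fiberSub Φ x := by
  have hc : Continuous (fun y : A => a * y) := continuous_mul_left a
  have h2 := (image_closure_subset_closure_image hc) (Set.mem_image_of_mem _ hs)
  refine closure_mono ?_ h2
  rintro - ⟨y, hy, rfl⟩
  exact fiberPre_mul_left Φ x hΦ a hy

lemma fiberPre_star {s : A} (hs : s ∈ fiberPre Φ x) : star s ∈ fiberPre Φ x := by
  induction hs using AddSubmonoid.closure_induction with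
  | mem y hy =>
    obtain ⟨f, b, hf, rfl⟩ := hy
    refine AddSubmonoid.subset_closure ⟨star f, star b, by simp [hf], ?_⟩
    rw [star_mul, ← map_star, hΦ (star f) (star b)]
  | zero => simpa using AddSubmonoid.zero_mem _
  | add y z _ _ hy hz => simpa [star_add] using AddSubmonoid.add_mem _ hy hz

lemma fiberSub_star {s : A} (hs : s ∈ fiberSub Φ x) : star s ∈ fiberSub Φ x := by
  have h2 := (image_closure_subset_closure_image continuous_star) (Set.mem_image_of_mem _ hs)
  refine closure_mono ?_ h2
  rintro - ⟨y, hy, rfl⟩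
  exact fiberPre_star Φ x hΦ hy

end FiberSub


/-- Quasi-unit for an ideal: given `j ∈ S` and `δ > 0`, there is `e ∈ S` with `w := 1 - e`
selfadjoint, `‖w‖ ≤ 1`, and `‖j * w‖ < δ`. -/
lemma exists_quasiUnit {A : Type*} [CStarAlgebra A] (S : Submodule ℂ A)
    (hl : ∀ (c : A) {s : A}, s ∈ S → c * s ∈ S) (hr : ∀ (c : A) {s : A}, s ∈ S → s * c ∈ S)
    {j : A} (hj : j ∈ S) {δ : ℝ} (hδ : 0 < δ) :
    ∃ e ∈ S, star (1 - e) = 1 - e ∧ ‖(1 : A) - e‖ ≤ 1 ∧ ‖j * (1 - e)‖ < δ := by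
  set t : ℝ := 2 / δ ^ 2 with ht_def
  have ht : 0 < t := by positivity
  set k : A := star j * j with hk_def
  have hk : IsSelfAdjoint k := IsSelfAdjoint.star_mul_self j
  have hsp : ∀ s ∈ spectrum ℝ k, 0 ≤ s := spectrum_star_mul_self_nonneg
  set g : ℝ → ℝ := fun s => (1 + t * s)⁻¹ with hg_def
  have hne : ∀ s ∈ spectrum ℝ k, 1 + t * s ≠ 0 := fun s hs => by
    have := hsp s hs; positivity
  have hg_cont : ContinuousOn g (spectrum ℝ k) := by
    apply ContinuousOn.inv₀
    · fun_prop
    · exact hne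
  set w : A := cfc g k with hw_def
  have hw_sa : IsSelfAdjoint w := cfc_predicate g k
  have hkS : k ∈ S := hl (star j) hj
  set e : A := k * (t • w) with he_def
  have heS : e ∈ S := hr (t • w) hkS
  -- rewrite e as a cfc
  have h_tw : t • w = cfc (fun s => t • g s) k := (cfc_smul t g k hg_cont).symm
  have he_cfc : e = cfc (fun s => s * (t • g s)) k := by
    rw [he_def, h_tw]
    rw [cfc_mul _ _ k (by fun_prop) (by fun_prop (disch := exact fun s hs => hne s hs))]
    rw [cfc_id' (R := ℝ) k]
  have hone : (1 : A) - e = w := by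
    have hsum : e + w = 1 := by
      rw [he_cfc, hw_def,
        ← cfc_add k (fun s => s * (t • g s)) g
          (by fun_prop (disch := exact fun s hs => hne s hs)) hg_cont,
        ← cfc_one (R := ℝ) k]
      apply cfc_congr
      intro s hs
      have h0 := hne s hs
      rw [Pi.one_apply]
      simp only [hg_def, smul_eq_mul]
      rw [← mul_assoc, ← add_one_mul, mul_comm s t, add_comm _ (1:ℝ), mul_inv_cancel₀ h0]
    rw [← hsum]; abel
  have hw_norm : ‖w‖ ≤ 1 := by
    apply norm_cfc_le one_pos.le
    intro s hs
    have h1 : (0:ℝ) < 1 + t * s := by have := hsp s hs; positivity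
    rw [Real.norm_eq_abs, abs_of_pos (by positivity)]
    rw [inv_le_one_iff₀]
    right; nlinarith [hsp s hs]
  -- the key estimate : ‖w * k * w‖ ≤ 1 / t
  have hwkw : w * (k * w) = cfc (fun s => g s * (s * g s)) k := by
    rw [cfc_mul _ _ k (by fun_prop) (by fun_prop (disch := exact fun s hs => hne s hs)),
      cfc_mul _ _ k (by fun_prop (disch := exact fun s hs => hne s hs))
        (by fun_prop (disch := exact fun s hs => hne s hs)), cfc_id' (R := ℝ) k]
  have hbound : ‖w * (k * w)‖ ≤ 1 / t := by
    rw [hwkw]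
    apply norm_cfc_le (by positivity)
    intro s hs
    have h0 := hsp s hs
    have h1 : (0:ℝ) < 1 + t * s := by positivity
    rw [Real.norm_eq_abs, abs_of_nonneg (by positivity)]
    have hgs : g s * (s * g s) = s / (1 + t * s) ^ 2 := by
      simp only [hg_def]
      field_simp
    rw [hgs, div_le_div_iff₀ (by positivity) ht]
    nlinarith [sq_nonneg (t * s), mul_nonneg h0 (mul_nonneg ht.le (mul_nonneg ht.le h0))]
  have hjw : ‖j * (1 - e)‖ ^ 2 ≤ 1 / t := by
    have : ‖j * w‖ * ‖j * w‖ = ‖star (j * w) * (j * w)‖ :=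
      (CStarRing.norm_star_mul_self).symm
    have hrw : star (j * w) * (j * w) = w * (k * w) := by
      rw [star_mul, hw_sa.star_eq]
      rw [hk_def]
      noncomm_ring
    rw [hone, sq]
    rw [this, hrw]
    exact hbound
  refine ⟨e, heS, by rw [hone]; exact hw_sa.star_eq, by rw [hone]; exact hw_norm, ?_⟩
  have h1t : 1 / t < δ ^ 2 := by
    rw [ht_def]
    rw [one_div, inv_div]
    have h2 : 0 < δ ^ 2 := by positivity
    linarith
  nlinarith [norm_nonneg (j * (1 - e)), hjw]

section QuotCStar

variable {A : Type*} [CStarAlgebra A] (S : Submodule ℂ A)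

/-- Multiplication on the quotient of a C*-algebra by a two-sided ideal. -/
noncomputable def qMul (hl : ∀ (c : A) {s : A}, s ∈ S → c * s ∈ S)
    (hr : ∀ (c : A) {s : A}, s ∈ S → s * c ∈ S) : Mul (A ⧸ S) :=
  ⟨fun x y => Quotient.liftOn₂' x y (fun a b => Submodule.Quotient.mk (a * b))
    (by
      intro a₁ b₁ a₂ b₂ h₁ h₂
      rw [Submodule.quotientRel_def] at h₁ h₂
      refine (Submodule.Quotient.eq S).mpr ?_
      have : a₁ * b₁ - a₂ * b₂ = (a₁ - a₂) * b₁ + a₂ * (b₁ - b₂) := by noncomm_ring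
      rw [this]
      exact S.add_mem (hr b₁ h₁) (hl a₂ h₂))⟩

/-- Star on the quotient. -/
noncomputable def qStar (hstar : ∀ {s : A}, s ∈ S → star s ∈ S) : Star (A ⧸ S) :=
  ⟨Quotient.map' star (by
    intro a b h
    rw [Submodule.quotientRel_def] at h ⊢
    rw [← star_sub]
    exact hstar h)⟩

variable (hSc : IsClosed (S : Set A))
    (hl : ∀ (c : A) {s : A}, s ∈ S → c * s ∈ S)
    (hr : ∀ (c : A) {s : A}, s ∈ S → s * c ∈ S)
    (hstar : ∀ {s : A}, s ∈ S → star s ∈ S)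

/-- The quotient of a C*-algebra by a closed two-sided star-closed ideal is a C*-algebra. -/
noncomputable abbrev qCStar : NonUnitalCStarAlgebra (A ⧸ S) := by
  haveI : IsClosed (S : Set A) := hSc
  letI instMul : Mul (A ⧸ S) := qMul S hl hr
  have mk_mul : ∀ a b : A,
      (Submodule.Quotient.mk a : A ⧸ S) * Submodule.Quotient.mk b
        = Submodule.Quotient.mk (a * b) := fun _ _ => rfl
  letI instRing : NonUnitalRing (A ⧸ S) :=
  { (inferInstance : AddCommGroup (A ⧸ S)), instMul with
    mul_assoc := fun x y z => Quotient.inductionOn₃' x y z fun a b c =>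
      congrArg Submodule.Quotient.mk (mul_assoc a b c)
    left_distrib := fun x y z => Quotient.inductionOn₃' x y z fun a b c =>
      congrArg Submodule.Quotient.mk (left_distrib a b c)
    right_distrib := fun x y z => Quotient.inductionOn₃' x y z fun a b c =>
      congrArg Submodule.Quotient.mk (right_distrib a b c)
    zero_mul := fun x => Quotient.inductionOn' x fun a =>
      congrArg Submodule.Quotient.mk (zero_mul a)
    mul_zero := fun x => Quotient.inductionOn' x fun a =>
      congrArg Submodule.Quotient.mk (mul_zero a) }
  have norm_mk_le : ∀ a : A, ‖(Submodule.Quotient.mk a : A ⧸ S)‖ ≤ ‖a‖ :=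
    fun a => Submodule.Quotient.norm_mk_le S a
  letI instNRing : NonUnitalNormedRing (A ⧸ S) :=
  { (inferInstance : NormedAddCommGroup (A ⧸ S)), instRing with
    norm_mul_le := by
      intro x y
      refine le_of_forall_pos_le_add fun ε hε => ?_
      have hx0 : 0 ≤ ‖x‖ := norm_nonneg x
      have hy0 : 0 ≤ ‖y‖ := norm_nonneg y
      set δ : ℝ := min 1 (ε / (‖x‖ + ‖y‖ + 2)) with hδ_def
      have hδpos : 0 < δ := lt_min one_pos (by positivity)
      have hδ1 : δ ≤ 1 := min_le_left _ _
      have hδ2 : δ * (‖x‖ + ‖y‖ + 2) ≤ ε := by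
        rw [← le_div_iff₀ (by positivity)]
        exact min_le_right _ _
      obtain ⟨a, rfl, ha⟩ := Submodule.Quotient.norm_mk_lt x hδpos
      obtain ⟨b, rfl, hb⟩ := Submodule.Quotient.norm_mk_lt y hδpos
      calc ‖Submodule.Quotient.mk a * Submodule.Quotient.mk b‖
          = ‖(Submodule.Quotient.mk (a * b) : A ⧸ S)‖ := by rw [mk_mul]
        _ ≤ ‖a * b‖ := norm_mk_le _
        _ ≤ ‖a‖ * ‖b‖ := norm_mul_le a b
        _ ≤ _ := by nlinarith [norm_nonneg a, norm_nonneg b] }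
  letI instStar : StarRing (A ⧸ S) :=
  { qStar S (fun h => hstar h) with
    star_involutive := fun x => Quotient.inductionOn' x fun a =>
      congrArg Submodule.Quotient.mk (star_star a)
    star_mul := fun x y => Quotient.inductionOn₂' x y fun a b =>
      congrArg Submodule.Quotient.mk (star_mul a b)
    star_add := fun x y => Quotient.inductionOn₂' x y fun a b =>
      congrArg Submodule.Quotient.mk (star_add a b) }
  have mk_star : ∀ a : A,
      star (Submodule.Quotient.mk a : A ⧸ S) = Submodule.Quotient.mk (star a) := fun _ => rfl
  letI instTower : IsScalarTower ℂ (A ⧸ S) (A ⧸ S) :=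
  ⟨fun c x y => Quotient.inductionOn₂' x y fun a b =>
    congrArg Submodule.Quotient.mk (smul_mul_assoc c a b)⟩
  letI instComm : SMulCommClass ℂ (A ⧸ S) (A ⧸ S) :=
  ⟨fun c x y => Quotient.inductionOn₂' x y fun a b =>
    congrArg Submodule.Quotient.mk (mul_smul_comm c a b).symm⟩
  letI instStarMod : StarModule ℂ (A ⧸ S) :=
  ⟨fun c x => Quotient.inductionOn' x fun a =>
    congrArg Submodule.Quotient.mk (star_smul c a)⟩
  letI instCStar : CStarRing (A ⧸ S) :=
  { norm_mul_self_le := by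
      intro x
      refine le_of_forall_pos_le_add fun ε hε => ?_
      obtain ⟨a, hax, -⟩ := Submodule.Quotient.norm_mk_lt x one_pos
      have hδpos : (0:ℝ) < ε / 2 := by positivity
      -- a representative of `star x * x` close to optimal
      obtain ⟨z', hz', hzlt⟩ := Submodule.Quotient.norm_mk_lt (star x * x) hδpos
      have hz'' : (Submodule.Quotient.mk (star a * a) : A ⧸ S) = Submodule.Quotient.mk z' := by
        rw [← mk_mul, ← mk_star, hax, hz']
      have hjS : star a * a - z' ∈ S := (Submodule.Quotient.eq S).mp hz''
      obtain ⟨e, heS, hw_star, hw_norm, hjw⟩ := exists_quasiUnit S hl hr hjS hδpos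
      set w : A := 1 - e with hw_def
      -- `mk (a * w) = x`
      have hmk_aw : (Submodule.Quotient.mk (a * w) : A ⧸ S) = x := by
        rw [← hax]
        refine (Submodule.Quotient.eq S).mpr ?_
        have : a * w - a = -(a * e) := by rw [hw_def]; noncomm_ring
        rw [this]
        exact S.neg_mem (hl a heS)
      have h1 : ‖x‖ ≤ ‖a * w‖ := by
        rw [← hmk_aw]; exact norm_mk_le _
      have h2 : ‖a * w‖ * ‖a * w‖ = ‖star (a * w) * (a * w)‖ :=
        CStarRing.norm_star_mul_self.symm
      have h3 : star (a * w) * (a * w) = w * ((star a * a) * w) := by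
        rw [star_mul, hw_star]; noncomm_ring
      have h4 : ‖w * ((star a * a) * w)‖ ≤ ‖(star a * a) * w‖ := by
        calc ‖w * ((star a * a) * w)‖ ≤ ‖w‖ * ‖(star a * a) * w‖ := norm_mul_le _ _
          _ ≤ 1 * ‖(star a * a) * w‖ := by
              exact mul_le_mul_of_nonneg_right hw_norm (norm_nonneg _)
          _ = ‖(star a * a) * w‖ := one_mul _
      have h5 : ‖(star a * a) * w‖ ≤ ‖z'‖ + ε / 2 := by
        have : (star a * a) * w = z' * w + (star a * a - z') * w := by noncomm_ring
        rw [this]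
        calc ‖z' * w + (star a * a - z') * w‖
            ≤ ‖z' * w‖ + ‖(star a * a - z') * w‖ := norm_add_le _ _
          _ ≤ ‖z'‖ * ‖w‖ + ε / 2 := by
              refine add_le_add (norm_mul_le _ _) ?_
              exact hjw.le
          _ ≤ ‖z'‖ + ε / 2 := by
              have := mul_le_mul_of_nonneg_left hw_norm (norm_nonneg z')
              simpa using add_le_add_right (by simpa using this) (ε / 2)
      have hxnn : 0 ≤ ‖x‖ := norm_nonneg x
      have hawnn : 0 ≤ ‖a * w‖ := norm_nonneg _
      have hz'nn : 0 ≤ ‖z'‖ := norm_nonneg _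
      have hst : ‖z'‖ < ‖star x * x‖ + ε / 2 := hzlt
      have h24 : ‖a * w‖ * ‖a * w‖ ≤ ‖z'‖ + ε / 2 := by
        rw [h2, h3]; exact h4.trans h5
      nlinarith [norm_nonneg (star x * x)] }
  exact { }

end QuotCStar


section Key

open Metric in
/-- A fibrewise-faithful `*`-homomorphism induces an isometry on the quotients. -/
lemma key_infDist {A B : Type*} [CStarAlgebra A] [CStarAlgebra B]
    (SA : Submodule ℂ A) (SB : Submodule ℂ B)
    (hSAc : IsClosed (SA : Set A)) (hSBc : IsClosed (SB : Set B))
    (hAl : ∀ (c : A) {s : A}, s ∈ SA → c * s ∈ SA)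
    (hAr : ∀ (c : A) {s : A}, s ∈ SA → s * c ∈ SA)
    (hAstar : ∀ {s : A}, s ∈ SA → star s ∈ SA)
    (hBl : ∀ (c : B) {s : B}, s ∈ SB → c * s ∈ SB)
    (hBr : ∀ (c : B) {s : B}, s ∈ SB → s * c ∈ SB)
    (hBstar : ∀ {s : B}, s ∈ SB → star s ∈ SB)
    (π : A →⋆ₙₐ[ℂ] B)
    (hfaith : ∀ a : A, a ∈ SA ↔ π a ∈ SB) (a : A) :
    infDist a (SA : Set A) = infDist (π a) (SB : Set B) := by
  haveI : IsClosed (SA : Set A) := hSAc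
  haveI : IsClosed (SB : Set B) := hSBc
  letI iA : NonUnitalCStarAlgebra (A ⧸ SA) := qCStar SA hSAc hAl hAr hAstar
  letI iB : NonUnitalCStarAlgebra (B ⧸ SB) := qCStar SB hSBc hBl hBr hBstar
  let φ : (A ⧸ SA) →⋆ₙₐ[ℂ] (B ⧸ SB) :=
  { toFun := Quotient.map' π (by
      intro c d h
      rw [Submodule.quotientRel_def] at h ⊢
      rw [← map_sub]
      exact (hfaith _).mp h),
    map_add' := fun x y => Quotient.inductionOn₂' x y fun c d =>
      congrArg Submodule.Quotient.mk (map_add π c d),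
    map_zero' := congrArg Submodule.Quotient.mk (map_zero π),
    map_smul' := fun r x => Quotient.inductionOn' x fun c =>
      congrArg Submodule.Quotient.mk (map_smul π r c),
    map_mul' := fun x y => Quotient.inductionOn₂' x y fun c d =>
      congrArg Submodule.Quotient.mk (map_mul π c d),
    map_star' := fun x => Quotient.inductionOn' x fun c =>
      congrArg Submodule.Quotient.mk (map_star π c) }
  have hinj : Function.Injective φ := by
    intro x y h
    obtain ⟨c, rfl⟩ := Submodule.Quotient.mk_surjective SA x
    obtain ⟨d, rfl⟩ := Submodule.Quotient.mk_surjective SA y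
    have h' : (Submodule.Quotient.mk (π c) : B ⧸ SB) = Submodule.Quotient.mk (π d) := h
    have hmem : π c - π d ∈ SB := (Submodule.Quotient.eq SB).mp h'
    rw [← map_sub] at hmem
    exact (Submodule.Quotient.eq SA).mpr ((hfaith _).mpr hmem)
  have hnormA : ∀ c : A, ‖(Submodule.Quotient.mk c : A ⧸ SA)‖ = infDist c (SA : Set A) :=
    fun c => QuotientAddGroup.norm_mk (S := SA.toAddSubgroup) c
  have hnormB : ∀ c : B, ‖(Submodule.Quotient.mk c : B ⧸ SB)‖ = infDist c (SB : Set B) :=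
    fun c => QuotientAddGroup.norm_mk (S := SB.toAddSubgroup) c
  calc infDist a (SA : Set A) = ‖(Submodule.Quotient.mk a : A ⧸ SA)‖ := (hnormA a).symm
    _ = ‖φ (Submodule.Quotient.mk a)‖ := (NonUnitalStarAlgHom.norm_map φ hinj _).symm
    _ = ‖(Submodule.Quotient.mk (π a) : B ⧸ SB)‖ := rfl
    _ = infDist (π a) (SB : Set B) := hnormB (π a)

end Key


/-- Let `A` and `B` be unital `C(X)`-algebras over a compact Hausdorff space `X`, and
`π : A → B` a `C(X)`-linear `*`-homomorphism such that for every `x` and `a`,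
`a ∈ I_x^A ↔ π(a) ∈ I_x^B` (so the induced representations of the fibres are well
defined and faithful).  If `B` is a continuous `C(X)`-algebra then so is `A`: all fibre
norm functions `x ↦ dist(a, I_x^A)` are continuous. -/
theorem stmt12 {X : Type*} [TopologicalSpace X] [CompactSpace X] [T2Space X]
    {A B : Type*} [CStarAlgebra A] [CStarAlgebra B]
    (ΦA : C(X, ℂ) →⋆ₐ[ℂ] A) (hΦA : ∀ f : C(X, ℂ), ∀ a : A, ΦA f * a = a * ΦA f)
    (ΦB : C(X, ℂ) →⋆ₐ[ℂ] B) (hΦB : ∀ f : C(X, ℂ), ∀ b : B, ΦB f * b = b * ΦB f)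
    (π : A →⋆ₙₐ[ℂ] B)
    (hπlin : ∀ f : C(X, ℂ), ∀ a : A, π (ΦA f * a) = ΦB f * π a)
    (hπfaith : ∀ x : X, ∀ a : A, a ∈ fiberIdeal ΦA x ↔ π a ∈ fiberIdeal ΦB x)
    (hBcont : ∀ b : B, Continuous (fun x : X => Metric.infDist b (fiberIdeal ΦB x))) :
    ∀ a : A, Continuous (fun x : X => Metric.infDist a (fiberIdeal ΦA x)) := by
  intro a
  have heq : (fun x : X => Metric.infDist a (fiberIdeal ΦA x))
      = fun x : X => Metric.infDist (π a) (fiberIdeal ΦB x) := by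
    funext x
    rw [← fiberSub_coe ΦA x, ← fiberSub_coe ΦB x]
    refine key_infDist (fiberSub ΦA x) (fiberSub ΦB x)
      (fiberSub_isClosed ΦA x) (fiberSub_isClosed ΦB x)
      (fun c _ hs => fiberSub_mul_left ΦA x hΦA c hs)
      (fun c _ hs => fiberSub_mul_right ΦA x c hs)
      (fun {_} hs => fiberSub_star ΦA x hΦA hs)
      (fun c _ hs => fiberSub_mul_left ΦB x hΦB c hs)
      (fun c _ hs => fiberSub_mul_right ΦB x c hs)
      (fun {_} hs => fiberSub_star ΦB x hΦB hs)
      π (fun c => ?_) a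
    have h1 : c ∈ fiberSub ΦA x ↔ c ∈ fiberIdeal ΦA x := Iff.rfl
    have h2 : π c ∈ fiberSub ΦB x ↔ π c ∈ fiberIdeal ΦB x := Iff.rfl
    rw [h1, h2]
    exact hπfaith x c
  rw [heq]
  exact hBcont (π a)
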